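/- Let f : E₁ → E₂ be a fiber homotopy equivalence between Hurewicz fibrations p₁ : E₁ → B and p₂ : E₂ → B. Then E₁ × {1} is a strong deformation retract of the mapping cylinder M_f, and the retraction can be chosen fiber-preserving over B with respect to the induced fibration p_f : M_f → B. -/

import Mathlib

open unitInterval Set

universe u

/-- A map `p : E → B` is a Hurewicz fibration if it is continuous and has the
homotopy lifting property with respect to every topological space. -/
def IsHurewiczFibration {E B : Type u} [TopologicalSpace E] [TopologicalSpace B]
    (p : E → B) : Prop :=
  Continuous p ∧
  ∀ (X : Type u) (_ : TopologicalSpace X) (h : C(X, E)) (H : C(X × I, B)),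
    (∀ x, H (x, 0) = p (h x)) →
    ∃ L : C(X × I, E), (∀ x, L (x, 0) = h x) ∧ ∀ z, p (L z) = H z

variable {E₁ E₂ B : Type u} [TopologicalSpace E₁] [TopologicalSpace E₂] [TopologicalSpace B]

/-- The relation generating the mapping cylinder of `f`: `(e,0) ∼ f e`. -/
def CylRel (f : E₁ → E₂) : (E₁ × I) ⊕ E₂ → (E₁ × I) ⊕ E₂ → Prop := fun a b =>
  ∃ e : E₁, a = Sum.inl (e, 0) ∧ b = Sum.inr (f e)

/-- The mapping cylinder `M_f = ((E₁ × I) ⊔ E₂)/((e,0) ∼ f e)`. -/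
def MappingCylinder (f : E₁ → E₂) : Type u := Quot (CylRel f)

instance (f : E₁ → E₂) : TopologicalSpace (MappingCylinder f) :=
  inferInstanceAs (TopologicalSpace (Quot (CylRel f)))

/-- The projection `p_f : M_f → B`. -/
def cylinderProj (p₁ : E₁ → B) (p₂ : E₂ → B) (f : E₁ → E₂)
    (hf : ∀ e, p₂ (f e) = p₁ e) : MappingCylinder f → B :=
  Quot.lift (Sum.elim (fun q => p₁ q.1) p₂) (by
    rintro a b ⟨e, rfl, rfl⟩
    simp [hf])

/-- The copy of `E₁` sitting in `M_f` as `E₁ × {1}`. -/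
def cylinderTop (f : E₁ → E₂) (e : E₁) : MappingCylinder f :=
  Quot.mk _ (Sum.inl (e, 1))


namespace CylAux


noncomputable def muR (t : ℝ) : ℝ := 2 / max 1 (2 * |2 * t - 1|)
noncomputable def sigT (t : ℝ) : ℝ := 1 / 2 + muR t * (t - 1 / 2)
noncomputable def sigU (t : ℝ) : ℝ := 2 - muR t

noncomputable def ttR (s t : ℝ) : ℝ := s * t + (1 - s) * sigT t
noncomputable def uuR (s t : ℝ) : ℝ := s + (1 - s) * sigU t
noncomputable def lsuR (s t : ℝ) : ℝ := min (2 / (1 + s)) (2 / (2 - uuR s t))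
noncomputable def lamR (s t : ℝ) : ℝ := lsuR s t / max 1 (lsuR s t * |2 * ttR s t - 1|)
noncomputable def S'R (s t : ℝ) : ℝ := lamR s t * (1 + s) - 1
noncomputable def T'R (s t : ℝ) : ℝ := 1 / 2 + lamR s t * (ttR s t - 1 / 2)
noncomputable def U'R (s t : ℝ) : ℝ := 2 - lamR s t * (2 - uuR s t)

variable {s t : ℝ}

lemma max_pos : (0:ℝ) < max 1 (2 * |2 * t - 1|) := lt_max_of_lt_left one_pos

lemma muR_pos : 0 < muR t := div_pos two_pos max_pos

lemma muR_le_two : muR t ≤ 2 := by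
  rw [muR, div_le_iff₀ max_pos]; nlinarith [le_max_left (1:ℝ) (2 * |2*t-1|)]

lemma one_le_muR (ht : t ∈ Icc (0:ℝ) 1) : 1 ≤ muR t := by
  rw [muR, le_div_iff₀ max_pos]
  have h1 : |2 * t - 1| ≤ 1 := by rw [abs_le]; constructor <;> nlinarith [ht.1, ht.2]
  have h2 : max 1 (2 * |2*t-1|) ≤ 2 := by rw [max_le_iff]; constructor <;> nlinarith
  linarith

lemma abs_two_sigT (ht : t ∈ Icc (0:ℝ) 1) : |2 * sigT t - 1| ≤ 1 := by
  have h : 2 * sigT t - 1 = muR t * (2 * t - 1) := by rw [sigT]; ring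
  rw [h, abs_mul, abs_of_pos (muR_pos)]
  rw [muR, div_mul_eq_mul_div, div_le_one max_pos]
  nlinarith [le_max_right (1:ℝ) (2 * |2*t-1|), abs_nonneg (2*t-1)]

lemma sigT_mem (ht : t ∈ Icc (0:ℝ) 1) : sigT t ∈ Icc (0:ℝ) 1 := by
  have := abs_two_sigT ht; rw [abs_le] at this
  constructor <;> nlinarith [this.1, this.2]

lemma sigU_mem (ht : t ∈ Icc (0:ℝ) 1) : sigU t ∈ Icc (0:ℝ) 1 := by
  have h1 := one_le_muR ht; have h2 := muR_le_two (t := t)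
  constructor <;> (rw [sigU]) <;> nlinarith

lemma ttR_mem (hs : s ∈ Icc (0:ℝ) 1) (ht : t ∈ Icc (0:ℝ) 1) : ttR s t ∈ Icc (0:ℝ) 1 := by
  have h := sigT_mem ht
  constructor <;> (rw [ttR]) <;> nlinarith [h.1, h.2, hs.1, hs.2, ht.1, ht.2]

lemma uuR_mem (hs : s ∈ Icc (0:ℝ) 1) (ht : t ∈ Icc (0:ℝ) 1) : uuR s t ∈ Icc (0:ℝ) 1 := by
  have h := sigU_mem ht
  constructor <;> (rw [uuR]) <;> nlinarith [h.1, h.2, hs.1, hs.2]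

lemma one_le_lsuR (hs : s ∈ Icc (0:ℝ) 1) (ht : t ∈ Icc (0:ℝ) 1) : 1 ≤ lsuR s t := by
  have h := uuR_mem hs ht
  rw [lsuR, le_min_iff]
  constructor
  · rw [le_div_iff₀ (by nlinarith [hs.1] : (0:ℝ) < 1 + s)]; nlinarith [hs.2]
  · rw [le_div_iff₀ (by nlinarith [h.2] : (0:ℝ) < 2 - uuR s t)]; nlinarith [h.1]

lemma lam_max_pos : (0:ℝ) < max 1 (lsuR s t * |2 * ttR s t - 1|) := lt_max_of_lt_left one_pos

lemma abs_two_ttR (hs : s ∈ Icc (0:ℝ) 1) (ht : t ∈ Icc (0:ℝ) 1) : |2 * ttR s t - 1| ≤ 1 := by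
  have hd := ttR_mem hs ht
  rw [abs_le]; constructor <;> nlinarith [hd.1, hd.2]

lemma one_le_lamR (hs : s ∈ Icc (0:ℝ) 1) (ht : t ∈ Icc (0:ℝ) 1) : 1 ≤ lamR s t := by
  have hL := one_le_lsuR hs ht
  have habs := abs_two_ttR hs ht
  rw [lamR, le_div_iff₀ lam_max_pos, one_mul, max_le_iff]
  refine ⟨by linarith, by nlinarith [abs_nonneg (2 * ttR s t - 1)]⟩

lemma lamR_le (hs : s ∈ Icc (0:ℝ) 1) (ht : t ∈ Icc (0:ℝ) 1) : lamR s t ≤ lsuR s t := by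
  have hL := one_le_lsuR hs ht
  rw [lamR, div_le_iff₀ lam_max_pos]
  nlinarith [le_max_left (1:ℝ) (lsuR s t * |2 * ttR s t - 1|)]

lemma lamR_mul_abs_le : lamR s t * |2 * ttR s t - 1| ≤ 1 := by
  rw [lamR, div_mul_eq_mul_div, div_le_one lam_max_pos]
  exact le_max_right _ _

lemma lsuR_le_left : lsuR s t ≤ 2 / (1 + s) := min_le_left _ _

lemma lsuR_le_right : lsuR s t ≤ 2 / (2 - uuR s t) := min_le_right _ _

lemma S'R_mem (hs : s ∈ Icc (0:ℝ) 1) (ht : t ∈ Icc (0:ℝ) 1) : S'R s t ∈ Icc (0:ℝ) 1 := by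
  have h1 := one_le_lamR hs ht
  have h2 := le_trans (lamR_le hs ht) (lsuR_le_left (s := s) (t := t))
  have hsp : (0:ℝ) < 1 + s := by nlinarith [hs.1]
  rw [le_div_iff₀ hsp] at h2
  constructor <;> (rw [S'R]) <;> nlinarith [hs.1]

lemma U'R_mem (hs : s ∈ Icc (0:ℝ) 1) (ht : t ∈ Icc (0:ℝ) 1) : U'R s t ∈ Icc (0:ℝ) 1 := by
  have h1 := one_le_lamR hs ht
  have hu := uuR_mem hs ht
  have hup : (0:ℝ) < 2 - uuR s t := by nlinarith [hu.2]
  have h2 := le_trans (lamR_le hs ht) (lsuR_le_right (s := s) (t := t))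
  rw [le_div_iff₀ hup] at h2
  constructor <;> (rw [U'R]) <;> nlinarith [hu.1, hu.2]

lemma T'R_mem (hs : s ∈ Icc (0:ℝ) 1) (ht : t ∈ Icc (0:ℝ) 1) : T'R s t ∈ Icc (0:ℝ) 1 := by
  have h1 := one_le_lamR hs ht
  have habs : |2 * T'R s t - 1| ≤ 1 := by
    have : 2 * T'R s t - 1 = lamR s t * (2 * ttR s t - 1) := by rw [T'R]; ring
    rw [this, abs_mul, abs_of_pos (by linarith : (0:ℝ) < lamR s t)]
    exact lamR_mul_abs_le
  rw [abs_le] at habs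
  constructor <;> nlinarith [habs.1, habs.2]

/-- target membership: the point (S',T',U') lies on one of the four faces. -/
lemma target_mem (hs : s ∈ Icc (0:ℝ) 1) (ht : t ∈ Icc (0:ℝ) 1) :
    U'R s t = 0 ∨ T'R s t = 0 ∨ T'R s t = 1 ∨ S'R s t = 1 := by
  have hL := one_le_lsuR hs ht
  have hu := uuR_mem hs ht
  have hup : (0:ℝ) < 2 - uuR s t := by nlinarith [hu.2]
  have hsp : (0:ℝ) < 1 + s := by nlinarith [hs.1]
  by_cases hmax : lsuR s t * |2 * ttR s t - 1| ≤ 1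
  · -- lam = lsu
    have hlam : lamR s t = lsuR s t := by
      rw [lamR, max_eq_left hmax, div_one]
    rcases min_cases (2 / (1 + s)) (2 / (2 - uuR s t)) with ⟨hmin, _⟩ | ⟨hmin, _⟩
    · right; right; right
      rw [S'R, hlam, lsuR, hmin, div_mul_cancel₀]
      · ring
      · exact ne_of_gt hsp
    · left
      rw [U'R, hlam, lsuR, hmin, div_mul_cancel₀]
      · ring
      · exact ne_of_gt hup
  · -- lam * d = 1
    push_neg at hmax
    have hd : lamR s t * |2 * ttR s t - 1| = 1 := by
      have hne : lsuR s t * |2 * ttR s t - 1| ≠ 0 := by nlinarith [abs_nonneg (2 * ttR s t - 1)]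
      rw [lamR, max_eq_right (le_of_lt hmax), div_mul_eq_mul_div, mul_comm, mul_comm (|2 * ttR s t - 1|) (lsuR s t), div_self hne]
    have h2T : 2 * T'R s t - 1 = lamR s t * (2 * ttR s t - 1) := by rw [T'R]; ring
    have habs : |2 * T'R s t - 1| = 1 := by
      rw [h2T, abs_mul, abs_of_pos (by linarith [one_le_lamR hs ht] : (0:ℝ) < lamR s t), hd]
    rcases abs_eq (by norm_num : (0:ℝ) ≤ 1) |>.mp habs with h | h
    · right; right; left; linarith
    · right; left; linarith

/-- scale = 1 on the glue face s = 0. -/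
lemma lamR_zero (ht : t ∈ Icc (0:ℝ) 1) : lamR 0 t = 1 := by
  have hmu1 := one_le_muR ht
  have hmupos : (0:ℝ) < muR t := muR_pos
  have hMpos : (0:ℝ) < max 1 (2 * |2 * t - 1|) := max_pos
  have huu : uuR 0 t = sigU t := by rw [uuR, sigU]; ring
  have htt : ttR 0 t = sigT t := by rw [ttR]; ring
  have hlsu : lsuR 0 t = 2 / muR t := by
    rw [lsuR, huu, sigU]
    have h1 : (2:ℝ) - (2 - muR t) = muR t := by ring
    rw [h1]
    have : 2 / muR t ≤ 2 / (1 + 0 : ℝ) := by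
      rw [div_le_div_iff₀ hmupos (by norm_num)]; nlinarith [muR_le_two (t := t)]
    rw [min_eq_right (by simpa using this)]
  have habs : |2 * ttR 0 t - 1| = muR t * |2 * t - 1| := by
    rw [htt]
    have : 2 * sigT t - 1 = muR t * (2 * t - 1) := by rw [sigT]; ring
    rw [this, abs_mul, abs_of_pos hmupos]
  rw [lamR, hlsu, habs]
  have hprod : 2 / muR t * (muR t * |2 * t - 1|) = 2 * |2 * t - 1| := by
    field_simp
  rw [hprod]
  have hmM : muR t * max 1 (2 * |2 * t - 1|) = 2 := by
    rw [muR]; field_simp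
  rw [div_div, mul_comm (muR t), ← mul_comm (muR t) (max 1 (2 * |2 * t - 1|))]
  rw [hmM]
  norm_num

lemma S'R_zero (ht : t ∈ Icc (0:ℝ) 1) : S'R 0 t = 0 := by
  rw [S'R, lamR_zero ht]; ring

lemma T'R_zero (ht : t ∈ Icc (0:ℝ) 1) : T'R 0 t = sigT t := by
  have htt : ttR 0 t = sigT t := by rw [ttR]; ring
  rw [T'R, lamR_zero ht, htt]; ring

lemma U'R_zero (ht : t ∈ Icc (0:ℝ) 1) : U'R 0 t = sigU t := by
  have huu : uuR 0 t = sigU t := by rw [uuR]; ring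
  rw [U'R, lamR_zero ht, huu]; ring

/-- values at t = 0 -/
lemma muR_zero' : muR 0 = 1 := by rw [muR]; norm_num
lemma sigT_zero : sigT 0 = 0 := by rw [sigT, muR_zero']; ring
lemma sigU_zero : sigU 0 = 1 := by rw [sigU, muR_zero']; ring
lemma muR_one : muR 1 = 1 := by rw [muR]; norm_num
lemma sigT_one : sigT 1 = 1 := by rw [sigT, muR_one]; ring
lemma sigU_one : sigU 1 = 1 := by rw [sigU, muR_one]; ring

/-- when |2 tt - 1| = 1 and lsu * 1 ≥ 1, lam = 1/1 ... : edge evaluation where tt ∈ {0,1}. -/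
lemma lam_edge (hs : s ∈ Icc (0:ℝ) 1) (habs : |2 * ttR s t - 1| = 1) (huu' : uuR s t = 1) :
    lamR s t = 1 := by
  have hsp : (0:ℝ) < 1 + s := by nlinarith [hs.1]
  have h2' : 2 / (1 + s) ≤ 2 := by rw [div_le_iff₀ hsp]; nlinarith [hs.1]
  have hlsu : lsuR s t = 2 / (1 + s) := by
    rw [lsuR, huu']
    have h21 : (2:ℝ) - 1 = 1 := by norm_num
    rw [h21, div_one, min_eq_left h2']
  have h1 : (1:ℝ) ≤ 2 / (1 + s) := by
    rw [le_div_iff₀ hsp]; nlinarith [hs.2]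
  rw [lamR, hlsu, habs, mul_one, max_eq_right h1]
  exact div_self (ne_of_gt (by linarith))

lemma ttR_t0 : ttR s 0 = 0 := by rw [ttR, sigT_zero]; ring
lemma uuR_t0 : uuR s 0 = 1 := by rw [uuR, sigU_zero]; ring
lemma ttR_t1 : ttR s 1 = 1 := by rw [ttR, sigT_one]; ring
lemma uuR_t1 : uuR s 1 = 1 := by rw [uuR, sigU_one]; ring

lemma lamR_t0 (hs : s ∈ Icc (0:ℝ) 1) : lamR s 0 = 1 :=
  lam_edge hs (by rw [ttR_t0]; norm_num) uuR_t0
lemma lamR_t1 (hs : s ∈ Icc (0:ℝ) 1) : lamR s 1 = 1 :=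
  lam_edge hs (by rw [ttR_t1]; norm_num) uuR_t1

lemma S'R_t0 (hs : s ∈ Icc (0:ℝ) 1) : S'R s 0 = s := by rw [S'R, lamR_t0 hs]; ring
lemma T'R_t0 (hs : s ∈ Icc (0:ℝ) 1) : T'R s 0 = 0 := by rw [T'R, lamR_t0 hs, ttR_t0]; ring
lemma U'R_t0 (hs : s ∈ Icc (0:ℝ) 1) : U'R s 0 = 1 := by rw [U'R, lamR_t0 hs, uuR_t0]; ring
lemma S'R_t1 (hs : s ∈ Icc (0:ℝ) 1) : S'R s 1 = s := by rw [S'R, lamR_t1 hs]; ring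
lemma T'R_t1 (hs : s ∈ Icc (0:ℝ) 1) : T'R s 1 = 1 := by rw [T'R, lamR_t1 hs, ttR_t1]; ring
lemma U'R_t1 (hs : s ∈ Icc (0:ℝ) 1) : U'R s 1 = 1 := by rw [U'R, lamR_t1 hs, uuR_t1]; ring

/-- values at s = 1 (the top) -/
lemma ttR_s1 : ttR 1 t = t := by rw [ttR]; ring
lemma uuR_s1 : uuR 1 t = 1 := by rw [uuR]; ring

lemma lamR_s1 (ht : t ∈ Icc (0:ℝ) 1) : lamR 1 t = 1 := by
  have hlsu : lsuR 1 t = 1 := by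
    rw [lsuR, uuR_s1]
    norm_num
  have habs : |2 * ttR 1 t - 1| ≤ 1 := by
    rw [ttR_s1, abs_le]; constructor <;> nlinarith [ht.1, ht.2]
  rw [lamR, hlsu, one_mul, max_eq_left habs, div_one]

lemma S'R_s1 (ht : t ∈ Icc (0:ℝ) 1) : S'R 1 t = 1 := by rw [S'R, lamR_s1 ht]; ring
lemma T'R_s1 (ht : t ∈ Icc (0:ℝ) 1) : T'R 1 t = t := by rw [T'R, lamR_s1 ht, ttR_s1]; ring
lemma U'R_s1 (ht : t ∈ Icc (0:ℝ) 1) : U'R 1 t = 1 := by rw [U'R, lamR_s1 ht, uuR_s1]; ring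

/-- target membership for the E₂ chart -/
lemma sig_target (ht : t ∈ Icc (0:ℝ) 1) : sigU t = 0 ∨ sigT t = 0 ∨ sigT t = 1 := by
  by_cases h : 2 * |2 * t - 1| ≤ 1
  · left
    rw [sigU, muR, max_eq_left h]; norm_num
  · push_neg at h
    have habs : |2 * sigT t - 1| = 1 := by
      have he : 2 * sigT t - 1 = muR t * (2 * t - 1) := by rw [sigT]; ring
      rw [he, abs_mul, abs_of_pos (muR_pos), muR, max_eq_right (le_of_lt h)]
      rw [div_mul_eq_mul_div, div_eq_one_iff_eq (by linarith)]
    rcases abs_eq (by norm_num : (0:ℝ) ≤ 1) |>.mp habs with h' | h'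
    · right; right; linarith
    · right; left; linarith

section Continuity

lemma continuous_muR : Continuous muR := by
  apply Continuous.div continuous_const
  · fun_prop
  · intro x; exact ne_of_gt max_pos

lemma continuous_sigT : Continuous sigT := by
  unfold sigT
  exact continuous_const.add (continuous_muR.mul (continuous_id.sub continuous_const))

lemma continuous_sigU : Continuous sigU := by
  unfold sigU
  exact continuous_const.sub continuous_muR

variable {X : Type*} [TopologicalSpace X] {sg tu : X → ℝ}
  (hσ : Continuous sg) (hτ : Continuous tu)
  (hσm : ∀ x, sg x ∈ Icc (0:ℝ) 1) (hτm : ∀ x, tu x ∈ Icc (0:ℝ) 1)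

include hσ hτ

lemma continuous_ttR : Continuous fun x => ttR (sg x) (tu x) := by
  unfold ttR
  exact (hσ.mul hτ).add ((continuous_const.sub hσ).mul (continuous_sigT.comp hτ))

lemma continuous_uuR : Continuous fun x => uuR (sg x) (tu x) := by
  unfold uuR
  exact hσ.add ((continuous_const.sub hσ).mul (continuous_sigU.comp hτ))

include hσm hτm

lemma continuous_lsuR : Continuous fun x => lsuR (sg x) (tu x) := by
  unfold lsuR
  apply Continuous.min
  · apply Continuous.div continuous_const (continuous_const.add hσ)
    intro x; have := (hσm x).1; intro h; simp only [Pi.add_apply] at h; linarith [h]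
  · apply Continuous.div continuous_const
      (Continuous.sub continuous_const (continuous_uuR hσ hτ))
    intro x
    have := (uuR_mem (hσm x) (hτm x)).2
    intro h; simp only [Pi.sub_apply] at h; linarith [h]

lemma continuous_lamR : Continuous fun x => lamR (sg x) (tu x) := by
  unfold lamR
  apply Continuous.div (continuous_lsuR hσ hτ hσm hτm)
  · apply Continuous.max continuous_const
    exact (continuous_lsuR hσ hτ hσm hτm).mul
      (Continuous.abs ((continuous_const.mul (continuous_ttR hσ hτ)).sub continuous_const))
  · intro x; exact ne_of_gt lam_max_pos

lemma continuous_S'R : Continuous fun x => S'R (sg x) (tu x) := by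
  unfold S'R
  exact ((continuous_lamR hσ hτ hσm hτm).mul (continuous_const.add hσ)).sub continuous_const

lemma continuous_T'R : Continuous fun x => T'R (sg x) (tu x) := by
  unfold T'R
  exact continuous_const.add ((continuous_lamR hσ hτ hσm hτm).mul
    ((continuous_ttR hσ hτ).sub continuous_const))

lemma continuous_U'R : Continuous fun x => U'R (sg x) (tu x) := by
  unfold U'R
  exact continuous_const.sub ((continuous_lamR hσ hτ hσm hτm).mul
    (continuous_const.sub (continuous_uuR hσ hτ)))

end Continuity



noncomputable def pI : ℝ → I := Set.projIcc (0:ℝ) 1 zero_le_one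

lemma continuous_pI : Continuous pI := continuous_projIcc

lemma pI_coe (x : I) : pI (x : ℝ) = x := by
  rw [pI, projIcc_of_mem _ x.2]

lemma pI_nonpos {x : ℝ} (h : x ≤ 0) : pI x = 0 := by
  rw [pI, projIcc_of_le_left _ h]; rfl

lemma pI_ge_one {x : ℝ} (h : 1 ≤ x) : pI x = 1 := by
  rw [pI, projIcc_of_right_le _ h]; rfl

lemma pI_zero : pI 0 = 0 := pI_nonpos le_rfl
lemma pI_one : pI 1 = 1 := pI_ge_one le_rfl

/-- the canonical quotient map -/
def cylMk (f : E₁ → E₂) : (E₁ × I) ⊕ E₂ → MappingCylinder f := Quot.mk _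

lemma continuous_cylMk (f : E₁ → E₂) : Continuous (cylMk f) := continuous_quot_mk

lemma cylMk_glue (f : E₁ → E₂) (e : E₁) :
    cylMk f (Sum.inl (e, 0)) = cylMk f (Sum.inr (f e)) :=
  Quot.sound ⟨e, rfl, rfl⟩

/-- Lift a pair of continuous maps with a parameter in `I` to the mapping cylinder. -/
noncomputable def cylParamLift {Y : Type*} [TopologicalSpace Y] (f : E₁ → E₂)
    (F₁ : C((E₁ × I) × I, Y)) (F₂ : C(E₂ × I, Y))
    (hglue : ∀ (e : E₁) (t : I), F₁ ((e, 0), t) = F₂ (f e, t)) :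
    C(MappingCylinder f × I, Y) :=
  ContinuousMap.uncurry
    ⟨Quot.lift (Sum.elim (fun q => F₁.curry q) (fun y => F₂.curry y))
      (by rintro a b ⟨e, rfl, rfl⟩
          exact ContinuousMap.ext fun t => hglue e t),
     continuous_quot_lift _ (Continuous.sumElim
       (ContinuousMap.continuous (F₁.curry)) (ContinuousMap.continuous (F₂.curry)))⟩

@[simp] lemma cylParamLift_inl {Y : Type*} [TopologicalSpace Y] (f : E₁ → E₂)
    (F₁ : C((E₁ × I) × I, Y)) (F₂ : C(E₂ × I, Y)) (h) (q : E₁ × I) (t : I) :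
    cylParamLift f F₁ F₂ h (cylMk f (Sum.inl q), t) = F₁ (q, t) := by
  simp [cylParamLift, cylMk]
  rfl

@[simp] lemma cylParamLift_inr {Y : Type*} [TopologicalSpace Y] (f : E₁ → E₂)
    (F₁ : C((E₁ × I) × I, Y)) (F₂ : C(E₂ × I, Y)) (h) (y : E₂) (t : I) :
    cylParamLift f F₁ F₂ h (cylMk f (Sum.inr y), t) = F₂ (y, t) := by
  simp [cylParamLift, cylMk]
  rfl

/-- Lift a pair of continuous maps to the mapping cylinder. -/
noncomputable def cylLift {Y : Type*} [TopologicalSpace Y] (f : E₁ → E₂)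
    (F₁ : C(E₁ × I, Y)) (F₂ : C(E₂, Y))
    (hglue : ∀ e : E₁, F₁ (e, 0) = F₂ (f e)) :
    C(MappingCylinder f, Y) :=
  ⟨Quot.lift (Sum.elim F₁ F₂)
      (by rintro a b ⟨e, rfl, rfl⟩; exact hglue e),
   continuous_quot_lift _ (Continuous.sumElim F₁.continuous F₂.continuous)⟩

@[simp] lemma cylLift_inl {Y : Type*} [TopologicalSpace Y] (f : E₁ → E₂)
    (F₁ : C(E₁ × I, Y)) (F₂ : C(E₂, Y)) (h) (q : E₁ × I) :
    cylLift f F₁ F₂ h (cylMk f (Sum.inl q)) = F₁ q := rfl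

@[simp] lemma cylLift_inr {Y : Type*} [TopologicalSpace Y] (f : E₁ → E₂)
    (F₁ : C(E₁ × I, Y)) (F₂ : C(E₂, Y)) (h) (y : E₂) :
    cylLift f F₁ F₂ h (cylMk f (Sum.inr y)) = F₂ y := rfl


section Main

variable {E₁ E₂ B : Type u} [TopologicalSpace E₁] [TopologicalSpace E₂] [TopologicalSpace B]
variable (f : C(E₁, E₂)) (g : C(E₂, E₁)) (K₁ : C(E₁ × I, E₁)) (K₂ : C(E₂ × I, E₂))

/-- corrected retraction on the cylinder part, real parameters. -/
noncomputable def phiR (e : E₁) (s τ : ℝ) : E₁ :=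
  K₁ (e, pI (2 - (2 - τ) / max s (1/3)))

lemma continuous_phiR {X : Type*} [TopologicalSpace X] {a : X → E₁} {sg tu : X → ℝ}
    (ha : Continuous a) (hσ : Continuous sg) (hτ : Continuous tu) :
    Continuous fun x => phiR K₁ (a x) (sg x) (tu x) := by
  unfold phiR
  apply K₁.continuous.comp
  apply ha.prodMk
  apply continuous_pI.comp
  apply Continuous.sub continuous_const
  apply Continuous.div (continuous_const.sub hτ) (hσ.max continuous_const)
  intro x
  have : (0:ℝ) < max (sg x) (1/3) := lt_max_of_lt_right (by norm_num)
  exact ne_of_gt this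

lemma phiR_zero (hK₁0 : ∀ x, K₁ (x, 0) = g (f x)) {e : E₁} {s τ : ℝ}
    (hs : s ≤ 1) (hτ : τ ≤ 0) : phiR K₁ e s τ = g (f e) := by
  have hm : max s (1/3) ≤ 1 := by
    rw [max_le_iff]; constructor <;> [exact hs; norm_num]
  have hm0 : (0:ℝ) < max s (1/3) := lt_max_of_lt_right (by norm_num)
  have h2 : (2:ℝ) ≤ (2 - τ) / max s (1/3) := by
    rw [le_div_iff₀ hm0]; nlinarith
  rw [phiR, pI_nonpos (by linarith), hK₁0]

lemma phiR_glue (hK₁0 : ∀ x, K₁ (x, 0) = g (f x)) {e : E₁} {s τ : ℝ}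
    (hs : s ≤ 1/3) (hτ : τ ≤ 1) : phiR K₁ e s τ = g (f e) := by
  have hm : max s (1/3) = 1/3 := max_eq_right hs
  rw [phiR, hm, pI_nonpos (by nlinarith), hK₁0]

lemma phiR_one_one (hK₁1 : ∀ x, K₁ (x, 1) = x) (e : E₁) : phiR K₁ e 1 1 = e := by
  have : max (1:ℝ) (1/3) = 1 := by norm_num
  rw [phiR, this]
  norm_num [pI_one, hK₁1]

/-- the retraction `M_f → E₁`. -/
noncomputable def rMap (hK₁0 : ∀ x, K₁ (x, 0) = g (f x)) :
    C(MappingCylinder (f : E₁ → E₂), E₁) :=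
  cylLift f ⟨fun q => phiR K₁ q.1 q.2 1,
      continuous_phiR K₁ continuous_fst (continuous_subtype_val.comp continuous_snd)
        continuous_const⟩ g
    (fun e => by
      have h0 : ((0:I):ℝ) = 0 := rfl
      simp only [ContinuousMap.coe_mk, h0]
      exact phiR_glue f g K₁ hK₁0 (by norm_num) le_rfl)

lemma rMap_top (hK₁0 : ∀ x, K₁ (x, 0) = g (f x)) (hK₁1 : ∀ x, K₁ (x, 1) = x) (e : E₁) :
    rMap f g K₁ hK₁0 (cylinderTop f e) = e := by
  have : cylinderTop (f : E₁ → E₂) e = cylMk f (Sum.inl (e, 1)) := rfl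
  rw [this, rMap, cylLift_inl]
  simpa using phiR_one_one K₁ hK₁1 e

/-- the big homotopy `H' : id ≃ i ∘ r`. -/
noncomputable def cylH (hK₁0 : ∀ x, K₁ (x, 0) = g (f x))
    (hK₂0 : ∀ y, K₂ (y, 0) = f (g y)) (hK₂1 : ∀ y, K₂ (y, 1) = y) :
    C(MappingCylinder (f : E₁ → E₂) × I, MappingCylinder (f : E₁ → E₂)) :=
  cylParamLift f
    ⟨fun p =>
      if ((p.2:ℝ)) ≤ 1/4 then cylMk f (Sum.inl (p.1.1, pI (p.1.2 * (1 - 4*p.2))))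
      else if ((p.2:ℝ)) ≤ 1/2 then cylMk f (Sum.inr (K₂ (f p.1.1, pI (2 - 4*p.2))))
      else if ((p.2:ℝ)) ≤ 3/4 then cylMk f (Sum.inl (g (f p.1.1), pI (4*p.2 - 2)))
      else cylMk f (Sum.inl (phiR K₁ p.1.1 p.1.2 (4*p.2 - 3), 1)), by
      have hc2 : Continuous fun p : (E₁ × I) × I => ((p.2 : ℝ)) :=
        continuous_subtype_val.comp continuous_snd
      have hcs : Continuous fun p : (E₁ × I) × I => ((p.1.2 : ℝ)) :=
        continuous_subtype_val.comp (continuous_snd.comp continuous_fst)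
      have hce : Continuous fun p : (E₁ × I) × I => p.1.1 := continuous_fst.comp continuous_fst
      apply Continuous.if
      · intro p hp
        have hp4 : ((p.2:ℝ)) = 1/4 := frontier_le_subset_eq hc2 continuous_const hp
        rw [hp4, if_pos (by norm_num : (1:ℝ)/4 ≤ 1/2),
          show pI ((p.1.2:ℝ) * (1 - 4*(1/4:ℝ))) = 0 by norm_num [pI_zero],
          show pI (2 - 4*(1/4:ℝ)) = 1 by norm_num [pI_one], hK₂1, cylMk_glue]
      · exact (continuous_cylMk f).comp (continuous_inl.comp
          (hce.prodMk (continuous_pI.comp (hcs.mul (continuous_const.sub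
            (continuous_const.mul hc2))))))
      · apply Continuous.if
        · intro p hp
          have hp2 : ((p.2:ℝ)) = 1/2 := frontier_le_subset_eq hc2 continuous_const hp
          rw [hp2, if_pos (by norm_num : (1:ℝ)/2 ≤ 3/4),
            show pI (2 - 4*(1/2:ℝ)) = 0 by norm_num [pI_zero],
            show pI (4*(1/2:ℝ) - 2) = 0 by norm_num [pI_zero], hK₂0]
          exact (cylMk_glue _ _).symm
        · exact (continuous_cylMk f).comp (continuous_inr.comp (K₂.continuous.comp
            ((f.continuous.comp hce).prodMk (continuous_pI.comp
              (continuous_const.sub (continuous_const.mul hc2))))))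
        · apply Continuous.if
          · intro p hp
            have hp3 : ((p.2:ℝ)) = 3/4 := frontier_le_subset_eq hc2 continuous_const hp
            rw [hp3, show pI (4*(3/4:ℝ) - 2) = 1 by norm_num [pI_one],
              phiR_zero f g K₁ hK₁0 p.1.2.2.2 (by norm_num)]
          · exact (continuous_cylMk f).comp (continuous_inl.comp
              ((g.continuous.comp (f.continuous.comp hce)).prodMk
                (continuous_pI.comp ((continuous_const.mul hc2).sub continuous_const))))
          · exact (continuous_cylMk f).comp (continuous_inl.comp
              ((continuous_phiR K₁ hce hcs ((continuous_const.mul hc2).sub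
                continuous_const)).prodMk continuous_const))⟩
    ⟨fun p =>
      if ((p.2:ℝ)) ≤ 1/4 then cylMk f (Sum.inr p.1)
      else if ((p.2:ℝ)) ≤ 1/2 then cylMk f (Sum.inr (K₂ (p.1, pI (2 - 4*p.2))))
      else if ((p.2:ℝ)) ≤ 3/4 then cylMk f (Sum.inl (g p.1, pI (4*p.2 - 2)))
      else cylMk f (Sum.inl (g p.1, 1)), by
      have hc2 : Continuous fun p : E₂ × I => ((p.2 : ℝ)) :=
        continuous_subtype_val.comp continuous_snd
      have hcy : Continuous fun p : E₂ × I => p.1 := continuous_fst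
      apply Continuous.if
      · intro p hp
        have hp4 : ((p.2:ℝ)) = 1/4 := frontier_le_subset_eq hc2 continuous_const hp
        rw [hp4, if_pos (by norm_num : (1:ℝ)/4 ≤ 1/2),
          show pI (2 - 4*(1/4:ℝ)) = 1 by norm_num [pI_one], hK₂1]
      · exact (continuous_cylMk f).comp (continuous_inr.comp hcy)
      · apply Continuous.if
        · intro p hp
          have hp2 : ((p.2:ℝ)) = 1/2 := frontier_le_subset_eq hc2 continuous_const hp
          rw [hp2, if_pos (by norm_num : (1:ℝ)/2 ≤ 3/4),
            show pI (2 - 4*(1/2:ℝ)) = 0 by norm_num [pI_zero],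
            show pI (4*(1/2:ℝ) - 2) = 0 by norm_num [pI_zero], hK₂0]
          exact (cylMk_glue _ _).symm
        · exact (continuous_cylMk f).comp (continuous_inr.comp (K₂.continuous.comp
            (hcy.prodMk (continuous_pI.comp
              (continuous_const.sub (continuous_const.mul hc2))))))
        · apply Continuous.if
          · intro p hp
            have hp3 : ((p.2:ℝ)) = 3/4 := frontier_le_subset_eq hc2 continuous_const hp
            rw [hp3, show pI (4*(3/4:ℝ) - 2) = 1 by norm_num [pI_one]]
          · exact (continuous_cylMk f).comp (continuous_inl.comp
              ((g.continuous.comp hcy).prodMk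
                (continuous_pI.comp ((continuous_const.mul hc2).sub continuous_const))))
          · exact (continuous_cylMk f).comp (continuous_inl.comp
              ((g.continuous.comp hcy).prodMk continuous_const))⟩
    (by
      intro e t
      have h0 : ((0:I):ℝ) = 0 := rfl
      simp only [ContinuousMap.coe_mk]
      split_ifs with h1 h2 h3
      · rw [h0, show pI ((0:ℝ) * (1 - 4*(t:ℝ))) = 0 by norm_num [pI_zero], cylMk_glue]
      · rfl
      · rfl
      · rw [h0, phiR_glue f g K₁ hK₁0 (by norm_num) (by nlinarith [t.2.2])])

end Main

section Eval

variable {E₁ E₂ B : Type u} [TopologicalSpace E₁] [TopologicalSpace E₂] [TopologicalSpace B]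
variable (f : C(E₁, E₂)) (g : C(E₂, E₁)) (K₁ : C(E₁ × I, E₁)) (K₂ : C(E₂ × I, E₂))
variable (hK₁0 : ∀ x, K₁ (x, 0) = g (f x)) (hK₂0 : ∀ y, K₂ (y, 0) = f (g y))
  (hK₂1 : ∀ y, K₂ (y, 1) = y)

lemma coeI0 : ((0:I):ℝ) = 0 := rfl
lemma coeI1 : ((1:I):ℝ) = 1 := rfl

lemma cylH_zero (z : MappingCylinder (f : E₁ → E₂)) :
    cylH f g K₁ K₂ hK₁0 hK₂0 hK₂1 (z, 0) = z := by
  induction z using Quot.ind with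
  | _ a =>
    cases a with
    | inl q =>
      show cylH f g K₁ K₂ hK₁0 hK₂0 hK₂1 (cylMk f (Sum.inl q), 0) = cylMk f (Sum.inl q)
      rw [cylH, cylParamLift_inl]
      simp only [ContinuousMap.coe_mk, coeI0]
      rw [if_pos (by norm_num : (0:ℝ) ≤ 1/4)]
      rw [show pI ((q.2:ℝ) * (1 - 4*0)) = q.2 by rw [show (q.2:ℝ) * (1-4*0) = q.2 by ring, pI_coe]]
    | inr y =>
      show cylH f g K₁ K₂ hK₁0 hK₂0 hK₂1 (cylMk f (Sum.inr y), 0) = cylMk f (Sum.inr y)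
      rw [cylH, cylParamLift_inr]
      simp only [ContinuousMap.coe_mk, coeI0]
      rw [if_pos (by norm_num : (0:ℝ) ≤ 1/4)]

lemma cylH_one (z : MappingCylinder (f : E₁ → E₂)) :
    cylH f g K₁ K₂ hK₁0 hK₂0 hK₂1 (z, 1) =
      cylinderTop f (rMap f g K₁ hK₁0 z) := by
  induction z using Quot.ind with
  | _ a =>
    cases a with
    | inl q =>
      show cylH f g K₁ K₂ hK₁0 hK₂0 hK₂1 (cylMk f (Sum.inl q), 1) = _
      rw [cylH, cylParamLift_inl]
      simp only [ContinuousMap.coe_mk, coeI1]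
      rw [if_neg (by norm_num), if_neg (by norm_num), if_neg (by norm_num)]
      rw [show (4*(1:ℝ) - 3) = 1 by norm_num]
      rfl
    | inr y =>
      show cylH f g K₁ K₂ hK₁0 hK₂0 hK₂1 (cylMk f (Sum.inr y), 1) = _
      rw [cylH, cylParamLift_inr]
      simp only [ContinuousMap.coe_mk, coeI1]
      rw [if_neg (by norm_num), if_neg (by norm_num), if_neg (by norm_num)]
      rfl

variable (p₁ : E₁ → B) (p₂ : E₂ → B) (hf : ∀ e, p₂ (f e) = p₁ e)

lemma cylH_fib (hg : ∀ y, p₁ (g y) = p₂ y)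
    (hK₁fib : ∀ x t, p₁ (K₁ (x, t)) = p₁ x) (hK₂fib : ∀ y t, p₂ (K₂ (y, t)) = p₂ y)
    (z : MappingCylinder (f : E₁ → E₂)) (t : I) :
    cylinderProj p₁ p₂ (f : E₁ → E₂) hf (cylH f g K₁ K₂ hK₁0 hK₂0 hK₂1 (z, t)) =
      cylinderProj p₁ p₂ (f : E₁ → E₂) hf z := by
  induction z using Quot.ind with
  | _ a =>
    cases a with
    | inl q =>
      show cylinderProj p₁ p₂ (f : E₁ → E₂) hf
        (cylH f g K₁ K₂ hK₁0 hK₂0 hK₂1 (cylMk f (Sum.inl q), t)) = p₁ q.1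
      rw [cylH, cylParamLift_inl]
      simp only [ContinuousMap.coe_mk]
      split_ifs
      · rfl
      · show p₂ (K₂ (f q.1, _)) = p₁ q.1
        rw [hK₂fib, hf]
      · show p₁ (g (f q.1)) = p₁ q.1
        rw [hg, hf]
      · show p₁ (phiR K₁ q.1 q.2 _) = p₁ q.1
        rw [phiR, hK₁fib]
    | inr y =>
      show cylinderProj p₁ p₂ (f : E₁ → E₂) hf
        (cylH f g K₁ K₂ hK₁0 hK₂0 hK₂1 (cylMk f (Sum.inr y), t)) = p₂ y
      rw [cylH, cylParamLift_inr]
      simp only [ContinuousMap.coe_mk]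
      split_ifs
      · rfl
      · show p₂ (K₂ (y, _)) = p₂ y
        rw [hK₂fib]
      · show p₁ (g y) = p₂ y
        rw [hg]
      · show p₁ (g y) = p₂ y
        rw [hg]

lemma rMap_fib (hg : ∀ y, p₁ (g y) = p₂ y) (hK₁fib : ∀ x t, p₁ (K₁ (x, t)) = p₁ x)
    (z : MappingCylinder (f : E₁ → E₂)) :
    p₁ (rMap f g K₁ hK₁0 z) = cylinderProj p₁ p₂ (f : E₁ → E₂) hf z := by
  induction z using Quot.ind with
  | _ a =>
    cases a with
    | inl q =>
      show p₁ (rMap f g K₁ hK₁0 (cylMk f (Sum.inl q))) = p₁ q.1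
      rw [rMap, cylLift_inl]
      simp only [ContinuousMap.coe_mk]
      rw [phiR, hK₁fib]
    | inr y =>
      show p₁ (rMap f g K₁ hK₁0 (cylMk f (Sum.inr y))) = p₂ y
      rw [rMap, cylLift_inr]
      exact hg y

/-- the retraction components of the cube retraction. -/
noncomputable def tauM : C(MappingCylinder (f : E₁ → E₂) × I, ℝ) :=
  cylParamLift f
    ⟨fun p => T'R p.1.2 p.2,
     continuous_T'R (continuous_subtype_val.comp (continuous_snd.comp continuous_fst))
       (continuous_subtype_val.comp continuous_snd) (fun p => p.1.2.2) (fun p => p.2.2)⟩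
    ⟨fun p => sigT p.2, continuous_sigT.comp (continuous_subtype_val.comp continuous_snd)⟩
    (fun e t => by simp only [ContinuousMap.coe_mk, coeI0]; exact T'R_zero t.2)

noncomputable def upsM : C(MappingCylinder (f : E₁ → E₂) × I, ℝ) :=
  cylParamLift f
    ⟨fun p => U'R p.1.2 p.2,
     continuous_U'R (continuous_subtype_val.comp (continuous_snd.comp continuous_fst))
       (continuous_subtype_val.comp continuous_snd) (fun p => p.1.2.2) (fun p => p.2.2)⟩
    ⟨fun p => sigU p.2, continuous_sigU.comp (continuous_subtype_val.comp continuous_snd)⟩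
    (fun e t => by simp only [ContinuousMap.coe_mk, coeI0]; exact U'R_zero t.2)

noncomputable def alpM : C(MappingCylinder (f : E₁ → E₂) × I, ℝ) :=
  cylParamLift f
    ⟨fun p => S'R p.1.2 p.2,
     continuous_S'R (continuous_subtype_val.comp (continuous_snd.comp continuous_fst))
       (continuous_subtype_val.comp continuous_snd) (fun p => p.1.2.2) (fun p => p.2.2)⟩
    ⟨fun _ => 0, continuous_const⟩
    (fun e t => by simp only [ContinuousMap.coe_mk, coeI0]; exact S'R_zero t.2)

noncomputable def ZM : C(MappingCylinder (f : E₁ → E₂) × I, MappingCylinder (f : E₁ → E₂)) :=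
  cylParamLift f
    ⟨fun p => cylMk f (Sum.inl (p.1.1, pI (S'R p.1.2 p.2))),
     (continuous_cylMk f).comp (continuous_inl.comp
       ((continuous_fst.comp continuous_fst).prodMk (continuous_pI.comp
         (continuous_S'R (continuous_subtype_val.comp (continuous_snd.comp continuous_fst))
           (continuous_subtype_val.comp continuous_snd)
           (fun p => p.1.2.2) (fun p => p.2.2)))))⟩
    ⟨fun p => cylMk f (Sum.inr p.1), (continuous_cylMk f).comp (continuous_inr.comp continuous_fst)⟩
    (fun e t => by
      simp only [ContinuousMap.coe_mk, coeI0]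
      rw [S'R_zero t.2, pI_zero, cylMk_glue])

noncomputable def thetaM : C(MappingCylinder (f : E₁ → E₂), ℝ) :=
  cylLift f ⟨fun q => (q.2:ℝ), continuous_subtype_val.comp continuous_snd⟩
    ⟨fun _ => 0, continuous_const⟩ (fun _ => rfl)

lemma tauM_mk_inl (q : E₁ × I) (t : I) :
    tauM f (cylMk f (Sum.inl q), t) = T'R q.2 t := by rw [tauM, cylParamLift_inl]; rfl
lemma tauM_mk_inr (y : E₂) (t : I) :
    tauM f (cylMk f (Sum.inr y), t) = sigT t := by rw [tauM, cylParamLift_inr]; rfl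
lemma upsM_mk_inl (q : E₁ × I) (t : I) :
    upsM f (cylMk f (Sum.inl q), t) = U'R q.2 t := by rw [upsM, cylParamLift_inl]; rfl
lemma upsM_mk_inr (y : E₂) (t : I) :
    upsM f (cylMk f (Sum.inr y), t) = sigU t := by rw [upsM, cylParamLift_inr]; rfl
lemma alpM_mk_inl (q : E₁ × I) (t : I) :
    alpM f (cylMk f (Sum.inl q), t) = S'R q.2 t := by rw [alpM, cylParamLift_inl]; rfl
lemma alpM_mk_inr (y : E₂) (t : I) :
    alpM f (cylMk f (Sum.inr y), t) = 0 := by rw [alpM, cylParamLift_inr]; rfl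
lemma ZM_mk_inl (q : E₁ × I) (t : I) :
    ZM f (cylMk f (Sum.inl q), t) = cylMk f (Sum.inl (q.1, pI (S'R q.2 t))) := by
  rw [ZM, cylParamLift_inl]; rfl
lemma ZM_mk_inr (y : E₂) (t : I) :
    ZM f (cylMk f (Sum.inr y), t) = cylMk f (Sum.inr y) := by rw [ZM, cylParamLift_inr]; rfl

lemma tauM_t0 (z : MappingCylinder (f : E₁ → E₂)) : tauM f (z, 0) = 0 := by
  induction z using Quot.ind with
  | _ a =>
    cases a with
    | inl q =>
      show tauM f (cylMk f (Sum.inl q), 0) = 0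
      rw [tauM, cylParamLift_inl]
      simp only [ContinuousMap.coe_mk, coeI0]
      exact T'R_t0 q.2.2
    | inr y =>
      show tauM f (cylMk f (Sum.inr y), 0) = 0
      rw [tauM, cylParamLift_inr]
      simp only [ContinuousMap.coe_mk, coeI0]
      exact sigT_zero

lemma tauM_t1 (z : MappingCylinder (f : E₁ → E₂)) : tauM f (z, 1) = 1 := by
  induction z using Quot.ind with
  | _ a =>
    cases a with
    | inl q =>
      show tauM f (cylMk f (Sum.inl q), 1) = 1
      rw [tauM, cylParamLift_inl]
      simp only [ContinuousMap.coe_mk, coeI1]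
      exact T'R_t1 q.2.2
    | inr y =>
      show tauM f (cylMk f (Sum.inr y), 1) = 1
      rw [tauM, cylParamLift_inr]
      simp only [ContinuousMap.coe_mk, coeI1]
      exact sigT_one

lemma upsM_t1 (z : MappingCylinder (f : E₁ → E₂)) : upsM f (z, 1) = 1 := by
  induction z using Quot.ind with
  | _ a =>
    cases a with
    | inl q =>
      show upsM f (cylMk f (Sum.inl q), 1) = 1
      rw [upsM, cylParamLift_inl]
      simp only [ContinuousMap.coe_mk, coeI1]
      exact U'R_t1 q.2.2
    | inr y =>
      show upsM f (cylMk f (Sum.inr y), 1) = 1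
      rw [upsM, cylParamLift_inr]
      simp only [ContinuousMap.coe_mk, coeI1]
      exact sigU_one

lemma ZM_t0 (z : MappingCylinder (f : E₁ → E₂)) : ZM f (z, 0) = z := by
  induction z using Quot.ind with
  | _ a =>
    cases a with
    | inl q =>
      show ZM f (cylMk f (Sum.inl q), 0) = cylMk f (Sum.inl q)
      rw [ZM, cylParamLift_inl]
      simp only [ContinuousMap.coe_mk, coeI0]
      rw [S'R_t0 q.2.2, pI_coe]
    | inr y =>
      exact ZM_mk_inr f y 0

lemma ZM_t1 (z : MappingCylinder (f : E₁ → E₂)) : ZM f (z, 1) = z := by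
  induction z using Quot.ind with
  | _ a =>
    cases a with
    | inl q =>
      show ZM f (cylMk f (Sum.inl q), 1) = cylMk f (Sum.inl q)
      rw [ZM, cylParamLift_inl]
      simp only [ContinuousMap.coe_mk, coeI1]
      rw [S'R_t1 q.2.2, pI_coe]
    | inr y =>
      exact ZM_mk_inr f y 1

lemma tauM_top (e : E₁) (t : I) : tauM f (cylinderTop f e, t) = (t:ℝ) := by
  show tauM f (cylMk f (Sum.inl (e, 1)), t) = (t:ℝ)
  rw [tauM, cylParamLift_inl]
  simp only [ContinuousMap.coe_mk, coeI1]
  exact T'R_s1 t.2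

lemma upsM_top (e : E₁) (t : I) : upsM f (cylinderTop f e, t) = 1 := by
  show upsM f (cylMk f (Sum.inl (e, 1)), t) = 1
  rw [upsM, cylParamLift_inl]
  simp only [ContinuousMap.coe_mk, coeI1]
  exact U'R_s1 t.2

lemma ZM_top (e : E₁) (t : I) : ZM f (cylinderTop f e, t) = cylinderTop f e := by
  show ZM f (cylMk f (Sum.inl (e, 1)), t) = cylMk f (Sum.inl (e, 1))
  rw [ZM, cylParamLift_inl]
  simp only [ContinuousMap.coe_mk, coeI1]
  rw [S'R_s1 t.2, pI_one]

lemma thetaM_top (e : E₁) : thetaM f (cylinderTop f e) = 1 := rfl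

lemma continuous_cylinderTop : Continuous (cylinderTop (f : E₁ → E₂)) :=
  (continuous_cylMk (f : E₁ → E₂)).comp
    (continuous_inl.comp (continuous_id.prodMk continuous_const))

lemma ZM_fib (w : MappingCylinder (f : E₁ → E₂) × I) :
    cylinderProj p₁ p₂ (f : E₁ → E₂) hf (ZM f w) =
      cylinderProj p₁ p₂ (f : E₁ → E₂) hf w.1 := by
  obtain ⟨z, t⟩ := w
  induction z using Quot.ind with
  | _ a =>
    cases a with
    | inl q =>
      show cylinderProj p₁ p₂ (f : E₁ → E₂) hf (ZM f (cylMk f (Sum.inl q), t)) = p₁ q.1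
      rw [ZM_mk_inl]
      rfl
    | inr y =>
      show cylinderProj p₁ p₂ (f : E₁ → E₂) hf (ZM f (cylMk f (Sum.inr y), t)) = p₂ y
      rw [ZM_mk_inr]
      rfl

lemma cyl_target (w : MappingCylinder (f : E₁ → E₂) × I) :
    upsM f w = 0 ∨ tauM f w = 0 ∨ tauM f w = 1 ∨ alpM f w = 1 := by
  obtain ⟨z, t⟩ := w
  induction z using Quot.ind with
  | _ a =>
    cases a with
    | inl q =>
      show upsM f (cylMk f (Sum.inl q), t) = 0 ∨ tauM f (cylMk f (Sum.inl q), t) = 0 ∨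
        tauM f (cylMk f (Sum.inl q), t) = 1 ∨ alpM f (cylMk f (Sum.inl q), t) = 1
      rw [upsM_mk_inl, tauM_mk_inl, alpM_mk_inl]
      exact target_mem q.2.2 t.2
    | inr y =>
      show upsM f (cylMk f (Sum.inr y), t) = 0 ∨ tauM f (cylMk f (Sum.inr y), t) = 0 ∨
        tauM f (cylMk f (Sum.inr y), t) = 1 ∨ alpM f (cylMk f (Sum.inr y), t) = 1
      rw [upsM_mk_inr, tauM_mk_inr, alpM_mk_inr]
      rcases sig_target t.2 with h | h | h
      · exact Or.inl h
      · exact Or.inr (Or.inl h)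
      · exact Or.inr (Or.inr (Or.inl h))

lemma alpM_eq_one {w : MappingCylinder (f : E₁ → E₂) × I} (h : alpM f w = 1) :
    ∃ e : E₁, ZM f w = cylinderTop f e := by
  obtain ⟨z, t⟩ := w
  induction z using Quot.ind with
  | _ a =>
    cases a with
    | inl q =>
      refine ⟨q.1, ?_⟩
      have hS : S'R q.2 t = 1 := by
        have := h
        exact (alpM_mk_inl f q t).symm.trans this
      show ZM f (cylMk f (Sum.inl q), t) = cylMk f (Sum.inl (q.1, 1))
      rw [ZM_mk_inl, hS, pI_one]
    | inr y =>
      have h0 : alpM f (cylMk f (Sum.inr y), t) = 0 := alpM_mk_inr f y t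
      exact absurd (h0 ▸ h) (by norm_num)

end Eval

end CylAux

/-- If `f : E₁ → E₂` is a fiber homotopy equivalence between
Hurewicz fibrations `p₁ : E₁ → B` and `p₂ : E₂ → B`, then `E₁ × {1}` is a strong
deformation retract of the mapping cylinder `M_f`, via a fiber preserving
deformation over `B` with respect to `p_f : M_f → B`. -/
theorem cylinderTop_strong_deformation_retract
    (p₁ : E₁ → B) (p₂ : E₂ → B)
    (hp₁ : IsHurewiczFibration p₁) (hp₂ : IsHurewiczFibration p₂)
    (f : C(E₁, E₂)) (hf : ∀ e, p₂ (f e) = p₁ e)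
    (g : C(E₂, E₁)) (hg : ∀ y, p₁ (g y) = p₂ y)
    (K₁ : C(E₁ × I, E₁)) (hK₁0 : ∀ x, K₁ (x, 0) = g (f x)) (hK₁1 : ∀ x, K₁ (x, 1) = x)
    (hK₁fib : ∀ x t, p₁ (K₁ (x, t)) = p₁ x)
    (K₂ : C(E₂ × I, E₂)) (hK₂0 : ∀ y, K₂ (y, 0) = f (g y)) (hK₂1 : ∀ y, K₂ (y, 1) = y)
    (hK₂fib : ∀ y t, p₂ (K₂ (y, t)) = p₂ y) :
    ∃ R : C(MappingCylinder (f : E₁ → E₂) × I, MappingCylinder (f : E₁ → E₂)),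
      (∀ z, R (z, 0) = z) ∧
      (∀ z, ∃ e : E₁, R (z, 1) = cylinderTop (f : E₁ → E₂) e) ∧
      (∀ z t, cylinderProj p₁ p₂ (f : E₁ → E₂) hf (R (z, t)) =
        cylinderProj p₁ p₂ (f : E₁ → E₂) hf z) ∧
      (∀ (e : E₁) (t : I), R (cylinderTop (f : E₁ → E₂) e, t) =
        cylinderTop (f : E₁ → E₂) e) := by
  classical
  refine ⟨⟨fun w =>
      if CylAux.tauM f w = 1 then
        CylAux.cylH f g K₁ K₂ hK₁0 hK₂0 hK₂1
          (cylinderTop (f : E₁ → E₂) (CylAux.rMap f g K₁ hK₁0 (CylAux.ZM f w)),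
            CylAux.pI (1 - CylAux.upsM f w))
      else
        CylAux.cylH f g K₁ K₂ hK₁0 hK₂0 hK₂1
          (CylAux.ZM f w,
            CylAux.pI (CylAux.tauM f w *
              (1 - CylAux.upsM f w * CylAux.thetaM f (CylAux.ZM f w)))), ?_⟩,
    ?_, ?_, ?_, ?_⟩
  · -- continuity
    apply Continuous.if
    · intro w hw
      have hD : IsClosed {w : MappingCylinder (f : E₁ → E₂) × I | CylAux.tauM f w = 1} :=
        isClosed_eq (CylAux.tauM f).continuous continuous_const
      have h1 : CylAux.tauM f w = 1 := by
        have := frontier_subset_closure (s := {w : MappingCylinder (f : E₁ → E₂) × I |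
          CylAux.tauM f w = 1}) hw
        rwa [hD.closure_eq] at this
      have h2 : w ∈ closure {w : MappingCylinder (f : E₁ → E₂) × I |
          ¬ CylAux.tauM f w = 1} := by
        rw [frontier_eq_closure_inter_closure] at hw
        exact hw.2
      have hC : IsClosed {w : MappingCylinder (f : E₁ → E₂) × I |
          CylAux.upsM f w = 0 ∨ CylAux.tauM f w = 0 ∨ CylAux.alpM f w = 1} := by
        rw [Set.setOf_or, Set.setOf_or]
        exact (isClosed_eq (CylAux.upsM f).continuous continuous_const).union
          ((isClosed_eq (CylAux.tauM f).continuous continuous_const).union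
            (isClosed_eq (CylAux.alpM f).continuous continuous_const))
      have hsub : {w : MappingCylinder (f : E₁ → E₂) × I | ¬ CylAux.tauM f w = 1} ⊆
          {w : MappingCylinder (f : E₁ → E₂) × I |
            CylAux.upsM f w = 0 ∨ CylAux.tauM f w = 0 ∨ CylAux.alpM f w = 1} := by
        intro v hv
        rcases CylAux.cyl_target f v with h | h | h | h
        · exact Or.inl h
        · exact Or.inr (Or.inl h)
        · exact absurd h hv
        · exact Or.inr (Or.inr h)
      have h3 := closure_minimal hsub hC h2
      rcases h3 with h | h | h
      · -- ups = 0
        show CylAux.cylH f g K₁ K₂ hK₁0 hK₂0 hK₂1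
            (cylinderTop (f : E₁ → E₂) (CylAux.rMap f g K₁ hK₁0 (CylAux.ZM f w)),
              CylAux.pI (1 - CylAux.upsM f w)) = _
        rw [h1, h, sub_zero, CylAux.pI_one, CylAux.cylH_one,
          CylAux.rMap_top f g K₁ hK₁0 hK₁1, one_mul, zero_mul, sub_zero,
          CylAux.pI_one, CylAux.cylH_one]
      · rw [h] at h1; norm_num at h1
      · -- alp = 1
        obtain ⟨e, hZ⟩ := CylAux.alpM_eq_one f h
        show CylAux.cylH f g K₁ K₂ hK₁0 hK₂0 hK₂1
            (cylinderTop (f : E₁ → E₂) (CylAux.rMap f g K₁ hK₁0 (CylAux.ZM f w)),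
              CylAux.pI (1 - CylAux.upsM f w)) = _
        rw [h1, hZ, CylAux.rMap_top f g K₁ hK₁0 hK₁1, CylAux.thetaM_top, mul_one, one_mul]
    · exact (CylAux.cylH f g K₁ K₂ hK₁0 hK₂0 hK₂1).continuous.comp
        (((CylAux.continuous_cylinderTop f).comp
            ((CylAux.rMap f g K₁ hK₁0).continuous.comp (CylAux.ZM f).continuous)).prodMk
          (CylAux.continuous_pI.comp (continuous_const.sub (CylAux.upsM f).continuous)))
    · exact (CylAux.cylH f g K₁ K₂ hK₁0 hK₂0 hK₂1).continuous.comp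
        ((CylAux.ZM f).continuous.prodMk
          (CylAux.continuous_pI.comp ((CylAux.tauM f).continuous.mul
            (continuous_const.sub ((CylAux.upsM f).continuous.mul
              ((CylAux.thetaM f).continuous.comp (CylAux.ZM f).continuous))))))
  · -- R (z, 0) = z
    intro z
    simp only [ContinuousMap.coe_mk]
    rw [CylAux.tauM_t0, if_neg (by norm_num), CylAux.ZM_t0, zero_mul, CylAux.pI_zero,
      CylAux.cylH_zero]
  · -- R (z, 1) ∈ top
    intro z
    refine ⟨CylAux.rMap f g K₁ hK₁0 z, ?_⟩
    simp only [ContinuousMap.coe_mk]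
    rw [CylAux.tauM_t1, if_pos rfl, CylAux.ZM_t1, CylAux.upsM_t1, sub_self, CylAux.pI_zero,
      CylAux.cylH_zero]
  · -- fiberwise
    intro z t
    simp only [ContinuousMap.coe_mk]
    split_ifs with h
    · rw [CylAux.cylH_fib f g K₁ K₂ hK₁0 hK₂0 hK₂1 p₁ p₂ hf hg hK₁fib hK₂fib]
      show p₁ (CylAux.rMap f g K₁ hK₁0 (CylAux.ZM f (z, t))) = _
      rw [CylAux.rMap_fib f g K₁ hK₁0 p₁ p₂ hf hg hK₁fib,
        CylAux.ZM_fib f p₁ p₂ hf (z, t)]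
    · rw [CylAux.cylH_fib f g K₁ K₂ hK₁0 hK₂0 hK₂1 p₁ p₂ hf hg hK₁fib hK₂fib,
        CylAux.ZM_fib f p₁ p₂ hf (z, t)]
  · -- rel top
    intro e t
    simp only [ContinuousMap.coe_mk]
    rw [CylAux.tauM_top, CylAux.ZM_top, CylAux.upsM_top, CylAux.thetaM_top]
    by_cases h : (t:ℝ) = 1
    · rw [if_pos h, CylAux.rMap_top f g K₁ hK₁0 hK₁1, sub_self, CylAux.pI_zero,
        CylAux.cylH_zero]
    · rw [if_neg h, show (1:ℝ) - 1 * 1 = 0 by norm_num, mul_zero, CylAux.pI_zero,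
        CylAux.cylH_zero]
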